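/- Let Z₀(A) denote the free abelian group on a compact Hausdorff space A, topologized as the colimit of the images of SP^k(A) × SP^k(A) under (a,b) ↦ a − b. If A is a closed subspace of a compact Hausdorff space X, then Z₀(A) is a closed subgroup of Z₀(X). -/

import Mathlib

open scoped BigOperators
open scoped Classical

/-- The group of zero-cycles on `X`, modeled by finitely supported functions `X →₀ ℤ`,
with the weak (colimit) topology of the filtration by the images of
`SP^n(X) × SP^n(X) → Z₀(X)`, `(a, b) ↦ a - b`; a finite configuration of `n` points is
modeled by a tuple `Fin n → X`, and its image is the corresponding sum of point cycles. -/
noncomputable def cycleTopology (X : Type*) [TopologicalSpace X] : TopologicalSpace (X →₀ ℤ) :=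
  ⨆ n : ℕ, TopologicalSpace.coinduced
    (fun p : (Fin n → X) × (Fin n → X) =>
      (∑ i, Finsupp.single (p.1 i) 1) - ∑ i, Finsupp.single (p.2 i) (1 : ℤ))
    inferInstance

/-- The additive "degree on `U`" homomorphism `Z₀(X) →+ ℤ`. -/
noncomputable def degOn {X : Type*} (U : Set X) : (X →₀ ℤ) →+ ℤ :=
  Finsupp.liftAddHom (fun x => if x ∈ U then AddMonoidHom.id ℤ else 0)

theorem degOn_single {X : Type*} (U : Set X) (x : X) (v : ℤ) :
    degOn U (Finsupp.single x v) = if x ∈ U then v else 0 := by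
  rw [degOn, Finsupp.liftAddHom_apply_single]
  split_ifs <;> rfl

theorem degOn_eq_zero {X : Type*} (U : Set X) (c : X →₀ ℤ)
    (h : ∀ x ∈ c.support, x ∉ U) : degOn U c = 0 := by
  rw [degOn, Finsupp.liftAddHom_apply]
  refine Finset.sum_eq_zero fun x hx => ?_
  simp [if_neg (h x hx)]

theorem degOn_sum_single {X : Type*} (U : Set X) {n : ℕ} (f : Fin n → X) :
    degOn U (∑ i, Finsupp.single (f i) (1 : ℤ)) =
      ∑ i, if f i ∈ U then (1 : ℤ) else 0 := by
  rw [map_sum]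
  exact Finset.sum_congr rfl fun i _ => degOn_single U (f i) 1

/-- If `A` is a closed subspace of a compact Hausdorff space `X`, then the group `Z₀(A)`
of zero-cycles supported on `A` is a closed subgroup of the topological group `Z₀(X)` of
zero-cycles on `X` (with the weak topology of the canonical filtration). -/
theorem zeroCycles_of_closed_subspace_isClosed
    {X : Type*} [TopologicalSpace X] [CompactSpace X] [T2Space X]
    (A : Set X) (hA : IsClosed A) :
    @IsClosed _ (cycleTopology X) {c : X →₀ ℤ | (c.support : Set X) ⊆ A} := by
  rw [cycleTopology, isClosed_iSup_iff]
  intro n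
  rw [isClosed_coinduced, ← isOpen_compl_iff]
  rw [isOpen_iff_forall_mem_open]
  rintro ⟨p, q⟩ hpq
  -- hpq : the cycle of (p,q) is not supported in A
  simp only [Set.mem_compl_iff, Set.mem_preimage, Set.mem_setOf_eq] at hpq
  set c : X →₀ ℤ := (∑ i, Finsupp.single (p i) 1) - ∑ i, Finsupp.single (q i) (1 : ℤ) with hc
  obtain ⟨x₀, hx₀s, hx₀A⟩ : ∃ x₀, x₀ ∈ c.support ∧ x₀ ∉ A := by
    by_contra h
    push_neg at h
    exact hpq fun x hx => h x hx
  have hcx₀ : c x₀ ≠ 0 := Finsupp.mem_support_iff.mp hx₀s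
  -- separate x₀ from A together with all other points of the configuration
  set K : Set X := A ∪ ((Set.range p ∪ Set.range q) \ {x₀}) with hK
  have hKclosed : IsClosed K := by
    refine hA.union (Set.Finite.isClosed ?_)
    exact (((Set.finite_range p).union (Set.finite_range q)).diff)
  have hx₀K : x₀ ∉ K := by
    intro h
    rcases h with h | h
    · exact hx₀A h
    · exact h.2 rfl
  obtain ⟨U, V, hU, hV, hx₀U, hKV, hUV⟩ :
      ∃ U V : Set X, IsOpen U ∧ IsOpen V ∧ {x₀} ⊆ U ∧ K ⊆ V ∧ Disjoint U V := by
    have := NormalSpace.normal {x₀} K isClosed_singleton hKclosed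
      (Set.disjoint_singleton_left.mpr hx₀K)
    exact this
  have hx₀U' : x₀ ∈ U := hx₀U rfl
  -- the open neighborhood of (p,q)
  set W : Set ((Fin n → X) × (Fin n → X)) :=
    (Set.univ.pi fun i => if p i = x₀ then U else V) ×ˢ
      (Set.univ.pi fun i => if q i = x₀ then U else V) with hW
  refine ⟨W, ?_, ?_, ?_⟩
  · -- W is contained in the complement
    rintro ⟨p', q'⟩ hmem
    simp only [hW, Set.mem_prod, Set.mem_pi, Set.mem_univ, forall_true_left] at hmem
    obtain ⟨hp', hq'⟩ := hmem
    simp only [Set.mem_compl_iff, Set.mem_preimage, Set.mem_setOf_eq]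
    intro hsupp
    set c' : X →₀ ℤ := (∑ i, Finsupp.single (p' i) 1) - ∑ i, Finsupp.single (q' i) (1 : ℤ)
      with hc'
    have hAU : ∀ x ∈ A, x ∉ U := fun x hx =>
      fun hxU => Set.disjoint_left.mp hUV hxU (hKV (Or.inl hx))
    have hzero : degOn U c' = 0 :=
      degOn_eq_zero U c' fun x hx => hAU x (hsupp hx)
    -- key count: membership of p' i in U matches p i = x₀
    have hiff : ∀ (f f' : Fin n → X), (∀ i, f' i ∈ if f i = x₀ then U else V) →
        (∀ i, f i ∈ Set.range p ∪ Set.range q) →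
        ∀ i, (f' i ∈ U) = (f i = x₀) := by
      intro f f' hf hfr i
      by_cases h : f i = x₀
      · have := hf i
        rw [if_pos h] at this
        simp [h, this]
      · have : f' i ∈ V := by simpa [if_neg h] using hf i
        have : f' i ∉ U := fun hu => Set.disjoint_left.mp hUV hu this
        simp [h, this]
    have hp'' := hiff p p' hp' (fun i => Or.inl ⟨i, rfl⟩)
    have hq'' := hiff q q' hq' (fun i => Or.inr ⟨i, rfl⟩)
    have hdeg : degOn U c' = c x₀ := by
      rw [hc', hc, map_sub, degOn_sum_single, degOn_sum_single,
        Finsupp.sub_apply, Finsupp.finset_sum_apply, Finsupp.finset_sum_apply]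
      congr 1
      · refine Finset.sum_congr rfl fun i _ => ?_
        rw [hp'' i, Finsupp.single_apply]
      · refine Finset.sum_congr rfl fun i _ => ?_
        rw [hq'' i, Finsupp.single_apply]
    rw [hdeg] at hzero
    exact hcx₀ hzero
  · -- W is open
    exact (isOpen_set_pi Set.finite_univ fun i _ => by split_ifs <;> assumption).prod
      (isOpen_set_pi Set.finite_univ fun i _ => by split_ifs <;> assumption)
  · -- (p,q) ∈ W
    refine ⟨fun i _ => ?_, fun i _ => ?_⟩ <;>
    · dsimp only
      split_ifs with h
      · rw [h]; exact hx₀U'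
      · exact hKV (Or.inr ⟨by first | exact Or.inl ⟨i, rfl⟩ | exact Or.inr ⟨i, rfl⟩, h⟩)
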